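/- (Boundedness of the covariance iteration.) Let r ∈ ℕ and J = Fin (r+1); let p : J → J → ℝ satisfy p i j ≥ 0 and let π : J → ℝ satisfy π j > 0 for all j. Let Ā be an n×n real matrix, B̄ an n×n_w real matrix, W an n_w×n_w real positive semidefinite matrix, V an m×m real positive semidefinite matrix, and for each j ∈ J let F_j (n×n) and X_j (n×m) be real matrices; define 𝔈_j(P₀, …, P_r) = ∑_{i ∈ J} p i j · (π i / π j) · ( F_j (Ā P_i Āᵀ + B̄ W B̄ᵀ) F_jᵀ + X_j V X_jᵀ ). Suppose there exist real symmetric positive semidefinite matrices P*₀, …, P*_r with 𝔈_j(P*₀, …, P*_r) ⪯ P*_j for all j ∈ J. Let (P_j[k])_{j ∈ J, k ∈ ℕ} be defined by the iteration P_j[k] = 𝔈_j(P₀[k−1], …, P_r[k−1]) for k ≥ 1, from symmetric initial matrices satisfying P_i[0] ⪯ P*_i for all i ∈ J. Then for all k ∈ ℕ and all j ∈ J, P_j[k] ⪯ P*_j; consequently trace(∑_{j ∈ J} π j · P_j[k]) ≤ trace(∑_{j ∈ J} π j · P*_j) for all k. -/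

import Mathlib

open Matrix


lemma psd_smul {n : ℕ} {A : Matrix (Fin n) (Fin n) ℝ} (hA : A.PosSemidef) {c : ℝ} (hc : 0 ≤ c) :
    (c • A).PosSemidef := by
  refine ⟨?_, fun x => ?_⟩
  · unfold Matrix.IsHermitian
    rw [conjTranspose_smul, hA.1]
    simp
  · exact (hA.smul hc).2 x

lemma psd_sum {n : ℕ} {ι : Type*} (s : Finset ι) (f : ι → Matrix (Fin n) (Fin n) ℝ)
    (h : ∀ i ∈ s, (f i).PosSemidef) : (∑ i ∈ s, f i).PosSemidef := by
  classical
  induction s using Finset.induction with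
  | empty => simpa using Matrix.PosSemidef.zero
  | insert _ _ hni ih =>
    rw [Finset.sum_insert hni]
    exact (h _ (Finset.mem_insert_self _ _)).add (ih fun i hi => h i (Finset.mem_insert_of_mem hi))

lemma psd_trace_nonneg {n : ℕ} {A : Matrix (Fin n) (Fin n) ℝ} (hA : A.PosSemidef) :
    0 ≤ A.trace := by
  refine Finset.sum_nonneg fun i _ => ?_
  have := hA.dotProduct_mulVec_nonneg (Pi.single i 1)
  simpa [dotProduct, mulVec, Pi.single_apply, Finset.sum_ite_eq, Finset.mul_sum] using this

lemma psd_conj {n : ℕ} {A : Matrix (Fin n) (Fin n) ℝ} (hA : A.PosSemidef)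
    (B : Matrix (Fin n) (Fin n) ℝ) : (B * A * Bᵀ).PosSemidef := by
  have := hA.mul_mul_conjTranspose_same B
  rwa [conjTranspose_eq_transpose_of_trivial] at this

/-- Boundedness of the coupled covariance iteration: if the coupled operator `𝔈` admits a
Loewner sub-fixed-point `P*` (symmetric positive semidefinite with `𝔈_j(P*) ⪯ P*_j`),
then the iteration `P_j[k] = 𝔈_j(P[k-1])` started below `P*` stays below `P*` for all
`k`; consequently the expected covariance index `trace(∑ j, π j • P_j[k])` is bounded by
`trace(∑ j, π j • P*_j)`. -/
theorem stmt_12 (r n nw m : ℕ)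
    (p : Fin (r + 1) → Fin (r + 1) → ℝ) (π : Fin (r + 1) → ℝ)
    (hp0 : ∀ i j, 0 ≤ p i j) (hπpos : ∀ j, 0 < π j)
    (Abar : Matrix (Fin n) (Fin n) ℝ) (Bbar : Matrix (Fin n) (Fin nw) ℝ)
    (Wm : Matrix (Fin nw) (Fin nw) ℝ) (hWm : Wm.PosSemidef)
    (Vm : Matrix (Fin m) (Fin m) ℝ) (hVm : Vm.PosSemidef)
    (F : Fin (r + 1) → Matrix (Fin n) (Fin n) ℝ)
    (X : Fin (r + 1) → Matrix (Fin n) (Fin m) ℝ)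
    (Pstar : Fin (r + 1) → Matrix (Fin n) (Fin n) ℝ)
    (hPstarSymm : ∀ j, (Pstar j).IsSymm) (hPstarPsd : ∀ j, (Pstar j).PosSemidef)
    (hPstarFix : ∀ j, (Pstar j - ∑ i, (p i j * (π i / π j)) •
      (F j * (Abar * Pstar i * Abarᵀ + Bbar * Wm * Bbarᵀ) * (F j)ᵀ
        + X j * Vm * (X j)ᵀ)).PosSemidef)
    (Pit : ℕ → Fin (r + 1) → Matrix (Fin n) (Fin n) ℝ)
    (hinitSymm : ∀ i, (Pit 0 i).IsSymm)
    (hinit : ∀ i, (Pstar i - Pit 0 i).PosSemidef)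
    (hiter : ∀ k j, Pit (k + 1) j = ∑ i, (p i j * (π i / π j)) •
      (F j * (Abar * Pit k i * Abarᵀ + Bbar * Wm * Bbarᵀ) * (F j)ᵀ
        + X j * Vm * (X j)ᵀ)) :
    (∀ k j, (Pstar j - Pit k j).PosSemidef) ∧
    (∀ k : ℕ, (∑ j, π j • Pit k j).trace ≤ (∑ j, π j • Pstar j).trace) := by
  have main : ∀ k j, (Pstar j - Pit k j).PosSemidef := by
    intro k
    induction k with
    | zero => exact hinit
    | succ k ih =>
      intro j
      have hc : ∀ i : Fin (r + 1), 0 ≤ p i j * (π i / π j) := fun i =>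
        mul_nonneg (hp0 i j) (div_nonneg (hπpos i).le (hπpos j).le)
      have heq : Pstar j - Pit (k + 1) j =
          (Pstar j - ∑ i, (p i j * (π i / π j)) •
            (F j * (Abar * Pstar i * Abarᵀ + Bbar * Wm * Bbarᵀ) * (F j)ᵀ
              + X j * Vm * (X j)ᵀ))
          + ∑ i, (p i j * (π i / π j)) •
            ((F j * Abar) * (Pstar i - Pit k i) * (F j * Abar)ᵀ) := by
        rw [hiter k j, sub_add, ← Finset.sum_sub_distrib]
        congr 1
        refine Finset.sum_congr rfl fun i _ => ?_
        rw [← smul_sub]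
        congr 1
        rw [transpose_mul]
        noncomm_ring
      rw [heq]
      exact (hPstarFix j).add (psd_sum _ _ fun i _ =>
        psd_smul (psd_conj (ih i) (F j * Abar)) (hc i))
  refine ⟨main, fun k => ?_⟩
  have h1 : (∑ j, π j • (Pstar j - Pit k j)).PosSemidef :=
    psd_sum _ _ fun j _ => psd_smul (main k j) (hπpos j).le
  have h2 := psd_trace_nonneg h1
  have h3 : (∑ j, π j • (Pstar j - Pit k j)) =
      (∑ j, π j • Pstar j) - ∑ j, π j • Pit k j := by
    rw [← Finset.sum_sub_distrib]
    exact Finset.sum_congr rfl fun j _ => smul_sub _ _ _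
  rw [h3, trace_sub] at h2
  linarith
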